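/- Let a>0, c>0, N>0 and let n≥0 be an integer. Assume p_n, q_n exist for the weight ω_{n,N} and p_{n+1}, q_{n+1} exist for the weight ω_{n+1,N}, and that β_n := (1/(2πi))·∮_Γ p_n(w)·ω_{n,N}(w)·w^{−1} dw ≠ 0. Then p_{n+1}(0) = b_n/β_n and q_{n+1}(0) = −1/β_n, where b_n := −(1/(2πi))·∮_Γ p_n(w)·w^n·ω_{n,N}(w) dw. (In the paper's notation these are the recurrence relations α_{n+1} = b_n/β_n and γ_{n+1} = −1/β_n.) -/

import Mathlib

open Polynomial Metric Set


/-- The contour weight `ω_{n,N}(w) = w^{-n} e^{-Naw} exp(Nc Log(1-a/w))`. -/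
noncomputable def omegaW (a c N : ℝ) (n : ℕ) (w : ℂ) : ℂ :=
  w ^ (-(n : ℤ)) * Complex.exp (-((N * a : ℝ) : ℂ) * w)
    * Complex.exp (((N * c : ℝ) : ℂ) * Complex.log (1 - (a : ℂ) / w))

lemma sphere_ne_zero {R : ℝ} (hR : 0 < R) {w : ℂ} (hw : w ∈ sphere (0:ℂ) R) : w ≠ 0 := by
  have : ‖w‖ = R := by simpa using mem_sphere_zero_iff_norm.mp hw
  intro h
  rw [h] at this
  simp at this
  exact hR.ne this

lemma omegaW_contOn (a c N R : ℝ) (ha : 0 < a) (hR : a < R) (n : ℕ) :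
    ContinuousOn (omegaW a c N n) (sphere (0:ℂ) R) := by
  intro w hw
  have hwR : ‖w‖ = R := by simpa using mem_sphere_zero_iff_norm.mp hw
  have hR0 : (0:ℝ) < R := ha.trans hR
  have hw0 : w ≠ 0 := sphere_ne_zero hR0 hw
  apply ContinuousAt.continuousWithinAt
  have h1 : ContinuousAt (fun w : ℂ => w ^ (-(n:ℤ))) w :=
    continuousAt_zpow₀ _ _ (Or.inl hw0)
  have h2 : ContinuousAt (fun w : ℂ => Complex.exp (-((N * a : ℝ) : ℂ) * w)) w :=
    (Complex.continuous_exp.comp (continuous_const.mul continuous_id)).continuousAt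
  have hre : 0 < (1 - (a:ℂ)/w).re := by
    have habs : ‖(a:ℂ)/w‖ = a / R := by
      rw [norm_div, Complex.norm_of_nonneg ha.le, hwR]
    have h4 : |((a:ℂ)/w).re| ≤ a / R := habs ▸ Complex.abs_re_le_norm _
    have h5 : a / R < 1 := (div_lt_one hR0).mpr hR
    have := abs_le.mp h4
    simp only [Complex.sub_re, Complex.one_re]
    linarith [this.2]
  have h3 : ContinuousAt (fun w : ℂ => Complex.log (1 - (a:ℂ)/w)) w := by
    have hin : ContinuousAt (fun w : ℂ => 1 - (a:ℂ)/w) w :=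
      continuousAt_const.sub (continuousAt_const.div continuousAt_id hw0)
    exact hin.clog (Complex.mem_slitPlane_iff.mpr (Or.inl hre))
  exact (h1.mul h2).mul (Complex.continuous_exp.continuousAt.comp
    (continuousAt_const.mul h3))

lemma circleIntegral_add' {f g : ℂ → ℂ} {c : ℂ} {R : ℝ}
    (hf : CircleIntegrable f c R) (hg : CircleIntegrable g c R) :
    circleIntegral (fun z => f z + g z) c R =
      circleIntegral f c R + circleIntegral g c R := by
  simp only [circleIntegral, smul_add]
  exact intervalIntegral.integral_add hf.out hg.out

lemma circleIntegral_finset_sum {ι : Type*} (s : Finset ι) (f : ι → ℂ → ℂ) (c : ℂ) (R : ℝ)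
    (h : ∀ i ∈ s, CircleIntegrable (f i) c R) :
    circleIntegral (fun z => ∑ i ∈ s, f i z) c R = ∑ i ∈ s, circleIntegral (f i) c R := by
  simp only [circleIntegral, Finset.smul_sum]
  exact intervalIntegral.integral_finset_sum fun i hi => (h i hi).out

lemma ci_mul_omegaW (a c N R : ℝ) (ha : 0 < a) (hR : a < R) (n : ℕ) {F : ℂ → ℂ}
    (hF : Continuous F) :
    CircleIntegrable (fun w => F w * omegaW a c N n w) 0 R :=
  ContinuousOn.circleIntegrable (by linarith)
    (hF.continuousOn.mul (omegaW_contOn a c N R ha hR n))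

lemma ci_mul_omegaW_div (a c N R : ℝ) (ha : 0 < a) (hR : a < R) (n : ℕ) {F : ℂ → ℂ}
    (hF : Continuous F) :
    CircleIntegrable (fun w => F w * omegaW a c N n w / w) 0 R :=
  ContinuousOn.circleIntegrable (by linarith)
    (((hF.continuousOn.mul (omegaW_contOn a c N R ha hR n))).div
      continuousOn_id (fun w hw => sphere_ne_zero (ha.trans hR) hw))

lemma omegaW_succ (a c N : ℝ) (n : ℕ) {w : ℂ} (hw : w ≠ 0) :
    omegaW a c N (n + 1) w = omegaW a c N n w / w := by
  unfold omegaW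
  have hcast : (-((n + 1 : ℕ) : ℤ)) = -(n:ℤ) + (-1) := by push_cast; ring
  rw [hcast, zpow_add₀ hw, zpow_neg_one]
  field_simp

/-- If `P` is orthogonal to `w^k`, `k < m`, against the weight `omegaW a c N n`, then it is
orthogonal to any polynomial of degree `< m`. -/
lemma orth_pair (a c N R : ℝ) (ha : 0 < a) (hR : a < R) (m n : ℕ) (P s : Polynomial ℂ)
    (hs : s.degree < (m : WithBot ℕ))
    (hP : ∀ k : ℕ, k < m →
      circleIntegral (fun w => P.eval w * w ^ k * omegaW a c N n w) 0 R = 0) :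
    circleIntegral (fun w => P.eval w * s.eval w * omegaW a c N n w) 0 R = 0 := by
  rcases eq_or_ne s 0 with rfl | hs0
  · simp [circleIntegral]
  have hdeg : s.natDegree < m := (Polynomial.natDegree_lt_iff_degree_lt hs0).mpr hs
  have hfun : (fun w : ℂ => P.eval w * s.eval w * omegaW a c N n w)
      = fun w => ∑ k ∈ Finset.range m, s.coeff k • (P.eval w * w ^ k * omegaW a c N n w) := by
    funext w
    rw [Polynomial.eval_eq_sum_range' hdeg, Finset.mul_sum, Finset.sum_mul]
    exact Finset.sum_congr rfl fun k _ => by simp [smul_eq_mul]; ring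
  rw [hfun, circleIntegral_finset_sum]
  · refine Finset.sum_eq_zero fun k hk => ?_
    rw [circleIntegral.integral_smul, hP k (Finset.mem_range.mp hk), smul_zero]
  · intro k _
    exact ContinuousOn.circleIntegrable (by linarith)
      (ContinuousOn.smul (f := fun _ => s.coeff k)
        (g := fun w => P.eval w * w ^ k * omegaW a c N n w) continuousOn_const (((P.continuous.mul (continuous_pow k)).continuousOn).mul
        (omegaW_contOn a c N R ha hR n)))


/-- `P` is the monic degree-`n` orthogonal polynomial for the weight `ω_{n,N}`
on the circle `|w| = R`. -/
def IsPn (a c N R : ℝ) (n : ℕ) (P : Polynomial ℂ) : Prop :=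
  P.Monic ∧ P.natDegree = n ∧
    ∀ k : ℕ, k < n →
      circleIntegral (fun w => P.eval w * w ^ k * omegaW a c N n w) 0 R = 0

/-- `Q` is the second-kind polynomial of degree `≤ n-1` for the weight `ω_{n,N}`
on the circle `|w| = R`. -/
def IsQn (a c N R : ℝ) (n : ℕ) (Q : Polynomial ℂ) : Prop :=
  Q.degree < (n : WithBot ℕ) ∧
    (∀ k : ℕ, k + 1 < n →
      circleIntegral (fun w => Q.eval w * w ^ k * omegaW a c N n w) 0 R = 0) ∧
    (-1 / (2 * (Real.pi : ℂ) * Complex.I))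
      * circleIntegral (fun w => Q.eval w * w ^ ((n : ℤ) - 1) * omegaW a c N n w) 0 R = 1

/-- `β_n = (1/(2πi)) ∮ p_n(w) ω_{n,N}(w) w^{-1} dw`. -/
noncomputable def betaN (a c N R : ℝ) (n : ℕ) (P : Polynomial ℂ) : ℂ :=
  (1 / (2 * (Real.pi : ℂ) * Complex.I))
    * circleIntegral (fun w => P.eval w * omegaW a c N n w / w) 0 R

/-- `b_n = -(1/(2πi)) ∮ p_n(w) w^n ω_{n,N}(w) dw`. -/
noncomputable def bSmallN (a c N R : ℝ) (n : ℕ) (P : Polynomial ℂ) : ℂ :=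
  -((1 / (2 * (Real.pi : ℂ) * Complex.I))
    * circleIntegral (fun w => P.eval w * w ^ n * omegaW a c N n w) 0 R)

/-- Recurrence relations `α_{n+1} = b_n/β_n` and `γ_{n+1} = -1/β_n`. -/
theorem statement18
    (a c N R : ℝ) (ha : 0 < a) (hc : 0 < c) (hN : 0 < N) (hR : a < R)
    (n : ℕ)
    (pn qn pn1 qn1 : Polynomial ℂ)
    (hpn : IsPn a c N R n pn) (hqn : IsQn a c N R n qn)
    (hpn1 : IsPn a c N R (n + 1) pn1) (hqn1 : IsQn a c N R (n + 1) qn1)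
    (hβ : betaN a c N R n pn ≠ 0) :
    pn1.eval 0 = bSmallN a c N R n pn / betaN a c N R n pn
    ∧ qn1.eval 0 = -1 / betaN a c N R n pn := by
  obtain ⟨hp1mon, hp1deg, hp1orth⟩ := hpn1
  obtain ⟨hpmon, hpdeg, hporth⟩ := hpn
  obtain ⟨hq1deg, hq1orth, hq1norm⟩ := hqn1
  have hR0 : (0 : ℝ) ≤ R := by linarith
  have hτ : (2 * (Real.pi : ℂ) * Complex.I) ≠ 0 :=
    mul_ne_zero (mul_ne_zero two_ne_zero (Complex.ofReal_ne_zero.mpr Real.pi_ne_zero))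
      Complex.I_ne_zero
  have hpn0 : pn ≠ 0 := hpmon.ne_zero
  have hdegpn : pn.degree = (n : WithBot ℕ) := by
    rw [Polynomial.degree_eq_natDegree hpn0, hpdeg]
  -- values of the two basic integrals
  have hIβ : circleIntegral (fun w => pn.eval w * omegaW a c N n w / w) 0 R
      = (2 * (Real.pi : ℂ) * Complex.I) * betaN a c N R n pn := by
    rw [betaN]; field_simp
  have hIb : circleIntegral (fun w => pn.eval w * w ^ n * omegaW a c N n w) 0 R
      = -((2 * (Real.pi : ℂ) * Complex.I) * bSmallN a c N R n pn) := by
    rw [bSmallN]; field_simp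
  -- facts about pn1.divX
  have hdivX1 : pn1.divX.natDegree = n := by
    have h := Polynomial.natDegree_divX_eq_natDegree_tsub_one (p := pn1)
    rw [hp1deg] at h; simpa using h
  have hdivX1c : pn1.divX.coeff n = 1 := by
    rw [Polynomial.coeff_divX]
    have h := hp1mon.coeff_natDegree
    rwa [hp1deg] at h
  have hdivX1ne : pn1.divX ≠ 0 := fun h => by simp [h] at hdivX1c
  have hdivX1deg : pn1.divX.degree = (n : WithBot ℕ) := by
    rw [Polynomial.degree_eq_natDegree hdivX1ne, hdivX1]
  have hdivX1lead : pn1.divX.leadingCoeff = 1 := by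
    rw [Polynomial.leadingCoeff, hdivX1, hdivX1c]
  -- u = pn1.divX - X^n has degree < n
  have hu : (pn1.divX - Polynomial.X ^ n).degree < (n : WithBot ℕ) := by
    have h := Polynomial.degree_sub_lt (p := pn1.divX) (q := Polynomial.X ^ n)
      (by rw [hdivX1deg, Polynomial.degree_X_pow]) hdivX1ne
      (by rw [hdivX1lead, Polynomial.leadingCoeff_X_pow])
    rwa [hdivX1deg] at h
  -- pn - X^n has degree < n
  have hv : (pn - Polynomial.X ^ n).degree < (n : WithBot ℕ) := by
    have h := Polynomial.degree_sub_lt (p := pn) (q := Polynomial.X ^ n)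
      (by rw [hdegpn, Polynomial.degree_X_pow]) hpn0
      (by rw [hpmon.leadingCoeff, Polynomial.leadingCoeff_X_pow])
    rwa [hdegpn] at h
  -- ⟨pn, pn1.divX⟩_n = -τ b
  have hfirst : circleIntegral (fun w => pn.eval w * (pn1.divX).eval w * omegaW a c N n w) 0 R
      = -((2 * (Real.pi : ℂ) * Complex.I) * bSmallN a c N R n pn) := by
    have hi1 : CircleIntegrable
        (fun w => pn.eval w * (pn1.divX - Polynomial.X ^ n).eval w * omegaW a c N n w) 0 R :=
      ci_mul_omegaW a c N R ha hR n (pn.continuous.mul (Polynomial.continuous _))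
    have hi2 : CircleIntegrable (fun w => pn.eval w * w ^ n * omegaW a c N n w) 0 R :=
      ci_mul_omegaW a c N R ha hR n (pn.continuous.mul (continuous_pow n))
    have hcg : circleIntegral (fun w => pn.eval w * (pn1.divX).eval w * omegaW a c N n w) 0 R
        = circleIntegral
          (fun w => pn.eval w * (pn1.divX - Polynomial.X ^ n).eval w * omegaW a c N n w
            + pn.eval w * w ^ n * omegaW a c N n w) 0 R := by
      apply circleIntegral.integral_congr hR0
      intro w _
      simp only [Polynomial.eval_sub, Polynomial.eval_pow, Polynomial.eval_X]
      ring
    rw [hcg, circleIntegral_add' hi1 hi2,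
      orth_pair a c N R ha hR n n pn _ hu hporth, hIb, zero_add]
  -- Part 1 : 0 = ⟨pn1, pn⟩_{n+1} = ⟨pn, pn1.divX⟩_n + pn1(0) ⟨pn, 1/w⟩_n
  have hA : circleIntegral (fun w => pn1.eval w * pn.eval w * omegaW a c N (n + 1) w) 0 R = 0 :=
    orth_pair a c N R ha hR (n + 1) (n + 1) pn1 pn
      (by rw [hdegpn]; exact_mod_cast lt_add_one n) hp1orth
  have hAsplit : circleIntegral (fun w => pn1.eval w * pn.eval w * omegaW a c N (n + 1) w) 0 R
      = circleIntegral (fun w => pn.eval w * (pn1.divX).eval w * omegaW a c N n w) 0 R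
        + pn1.coeff 0 • circleIntegral (fun w => pn.eval w * omegaW a c N n w / w) 0 R := by
    have hi1 : CircleIntegrable
        (fun w => pn.eval w * (pn1.divX).eval w * omegaW a c N n w) 0 R :=
      ci_mul_omegaW a c N R ha hR n (pn.continuous.mul (Polynomial.continuous _))
    have hi2 : CircleIntegrable
        (fun w => pn1.coeff 0 • (pn.eval w * omegaW a c N n w / w)) 0 R :=
      ContinuousOn.circleIntegrable hR0 (ContinuousOn.smul (f := fun _ => pn1.coeff 0)
        (g := fun w => pn.eval w * omegaW a c N n w / w) continuousOn_const
        (((pn.continuous.continuousOn.mul (omegaW_contOn a c N R ha hR n))).div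
          continuousOn_id (fun w hw => sphere_ne_zero (ha.trans hR) hw)))
    rw [← circleIntegral.integral_smul, ← circleIntegral_add' hi1 hi2]
    apply circleIntegral.integral_congr hR0
    intro w hw
    have hw0 : w ≠ 0 := sphere_ne_zero (ha.trans hR) hw
    have hsucc := omegaW_succ a c N n hw0
    have hev : pn1.eval w = w * (pn1.divX).eval w + pn1.coeff 0 := by
      conv_lhs => rw [← Polynomial.X_mul_divX_add pn1]
      simp [-Polynomial.X_mul_divX_add]
    simp only [hsucc, hev, smul_eq_mul]
    field_simp
  have heq1 : pn1.coeff 0 * betaN a c N R n pn = bSmallN a c N R n pn := by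
    rw [hAsplit, hfirst, hIβ, smul_eq_mul] at hA
    have h2 : (2 * (Real.pi : ℂ) * Complex.I) * (pn1.coeff 0 * betaN a c N R n pn)
        = (2 * (Real.pi : ℂ) * Complex.I) * bSmallN a c N R n pn := by
      linear_combination hA
    exact mul_left_cancel₀ hτ h2
  -- Part 2
  have hq1orth' : ∀ k : ℕ, k < n →
      circleIntegral (fun w => qn1.eval w * w ^ k * omegaW a c N (n + 1) w) 0 R = 0 :=
    fun k hk => hq1orth k (by omega)
  have hVal : circleIntegral (fun w => qn1.eval w * w ^ n * omegaW a c N (n + 1) w) 0 R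
      = -(2 * (Real.pi : ℂ) * Complex.I) := by
    have hfeq : (fun w : ℂ => qn1.eval w * w ^ (((n + 1 : ℕ) : ℤ) - 1) * omegaW a c N (n + 1) w)
        = fun w => qn1.eval w * w ^ n * omegaW a c N (n + 1) w := by
      funext w
      rw [show ((n + 1 : ℕ) : ℤ) - 1 = (n : ℤ) by push_cast; ring, zpow_natCast]
    rw [hfeq] at hq1norm
    field_simp at hq1norm
    linear_combination -hq1norm
  have hB : circleIntegral (fun w => qn1.eval w * pn.eval w * omegaW a c N (n + 1) w) 0 R
      = -(2 * (Real.pi : ℂ) * Complex.I) := by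
    have hi1 : CircleIntegrable
        (fun w => qn1.eval w * (pn - Polynomial.X ^ n).eval w * omegaW a c N (n + 1) w) 0 R :=
      ci_mul_omegaW a c N R ha hR (n + 1) (qn1.continuous.mul (Polynomial.continuous _))
    have hi2 : CircleIntegrable (fun w => qn1.eval w * w ^ n * omegaW a c N (n + 1) w) 0 R :=
      ci_mul_omegaW a c N R ha hR (n + 1) (qn1.continuous.mul (continuous_pow n))
    have hcg : circleIntegral (fun w => qn1.eval w * pn.eval w * omegaW a c N (n + 1) w) 0 R
        = circleIntegral
          (fun w => qn1.eval w * (pn - Polynomial.X ^ n).eval w * omegaW a c N (n + 1) w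
            + qn1.eval w * w ^ n * omegaW a c N (n + 1) w) 0 R := by
      apply circleIntegral.integral_congr hR0
      intro w _
      simp only [Polynomial.eval_sub, Polynomial.eval_pow, Polynomial.eval_X]
      ring
    rw [hcg, circleIntegral_add' hi1 hi2,
      orth_pair a c N R ha hR n (n + 1) qn1 _ hv hq1orth', hVal, zero_add]
  have hq1divdeg : qn1.divX.degree < (n : WithBot ℕ) := by
    rw [Polynomial.degree_lt_iff_coeff_zero]
    intro m hm
    rw [Polynomial.coeff_divX]
    apply Polynomial.coeff_eq_zero_of_degree_lt
    calc qn1.degree < ((n + 1 : ℕ) : WithBot ℕ) := by exact_mod_cast hq1deg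
      _ ≤ ((m + 1 : ℕ) : WithBot ℕ) := by exact_mod_cast Nat.add_le_add_right hm 1
  have hBsplit : circleIntegral (fun w => qn1.eval w * pn.eval w * omegaW a c N (n + 1) w) 0 R
      = circleIntegral (fun w => pn.eval w * (qn1.divX).eval w * omegaW a c N n w) 0 R
        + qn1.coeff 0 • circleIntegral (fun w => pn.eval w * omegaW a c N n w / w) 0 R := by
    have hi1 : CircleIntegrable
        (fun w => pn.eval w * (qn1.divX).eval w * omegaW a c N n w) 0 R :=
      ci_mul_omegaW a c N R ha hR n (pn.continuous.mul (Polynomial.continuous _))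
    have hi2 : CircleIntegrable
        (fun w => qn1.coeff 0 • (pn.eval w * omegaW a c N n w / w)) 0 R :=
      ContinuousOn.circleIntegrable hR0 (ContinuousOn.smul (f := fun _ => qn1.coeff 0)
        (g := fun w => pn.eval w * omegaW a c N n w / w) continuousOn_const
        (((pn.continuous.continuousOn.mul (omegaW_contOn a c N R ha hR n))).div
          continuousOn_id (fun w hw => sphere_ne_zero (ha.trans hR) hw)))
    rw [← circleIntegral.integral_smul, ← circleIntegral_add' hi1 hi2]
    apply circleIntegral.integral_congr hR0
    intro w hw
    have hw0 : w ≠ 0 := sphere_ne_zero (ha.trans hR) hw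
    have hsucc := omegaW_succ a c N n hw0
    have hev : qn1.eval w = w * (qn1.divX).eval w + qn1.coeff 0 := by
      conv_lhs => rw [← Polynomial.X_mul_divX_add qn1]
      simp [-Polynomial.X_mul_divX_add]
    simp only [hsucc, hev, smul_eq_mul]
    field_simp
  have heq2 : qn1.coeff 0 * betaN a c N R n pn = -1 := by
    rw [hBsplit, orth_pair a c N R ha hR n n pn _ hq1divdeg hporth, hIβ, smul_eq_mul,
      zero_add] at hB
    have h2 : (2 * (Real.pi : ℂ) * Complex.I) * (qn1.coeff 0 * betaN a c N R n pn)
        = (2 * (Real.pi : ℂ) * Complex.I) * (-1) := by linear_combination hB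
    exact mul_left_cancel₀ hτ h2
  constructor
  · rw [← Polynomial.coeff_zero_eq_eval_zero, eq_div_iff hβ]
    exact heq1
  · rw [← Polynomial.coeff_zero_eq_eval_zero, eq_div_iff hβ]
    exact heq2
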